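/- Let N ≡ 4 (mod 8). There is no family P_1, ..., P_{N+1} of subsets of {1, ..., 2N-1}, each of size N, with all pairwise intersections of size N/2, empty total symmetric difference, and such that P_1 = {1,...,N}, P_2 = {N/2+1,...,3N/2}, and every other P_i satisfies |P_i ∩ ({3N/2+1,...,2N-1})| = N/4. (Consequently there is no binary minimal [3N, N+1] code when N ≡ 4 mod 8.) -/

import Mathlib

/-- For `N ≡ 4 (mod 8)`, there is no family of `N+1` subsets of
`{1,…,2N-1}` (here `Fin (2N-1)`, zero-based), each of size `N`, with all
pairwise intersections of size `N/2`, empty total symmetric difference,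
with `P_1 = {1,…,N}` and `P_2 = {N/2+1,…,3N/2}`, and every other member
meeting `{3N/2+1,…,2N-1}` in exactly `N/4` elements. (Consequently there is
no binary minimal `[3N, N+1]` code when `N ≡ 4 (mod 8)`.) -/
theorem no_family_N_mod8 {N : ℕ} (hN : N % 8 = 4) :
    ¬ ∃ P : Fin (N + 1) → Finset (Fin (2 * N - 1)),
      (∀ i, (P i).card = N) ∧
      (∀ i j, i ≠ j → (P i ∩ P j).card = N / 2) ∧
      (∀ x : Fin (2 * N - 1), Even (Finset.univ.filter (fun i => x ∈ P i)).card) ∧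
      P 0 = Finset.univ.filter (fun x : Fin (2 * N - 1) => (x : ℕ) < N) ∧
      P 1 = Finset.univ.filter
        (fun x : Fin (2 * N - 1) => N / 2 ≤ (x : ℕ) ∧ (x : ℕ) < N + N / 2) ∧
      (∀ i : Fin (N + 1), 2 ≤ (i : ℕ) →
        (P i ∩ Finset.univ.filter (fun x : Fin (2 * N - 1) => N + N / 2 ≤ (x : ℕ))).card
          = N / 4) := by
  rintro ⟨P, hcard, hint, heven, h0, h1, hT⟩
  have hN4 : 4 ≤ N := by omega
  set T : Finset (Fin (2 * N - 1)) :=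
    Finset.univ.filter (fun x : Fin (2 * N - 1) => N + N / 2 ≤ (x : ℕ)) with hTdef
  -- double counting
  have key : ∑ i : Fin (N + 1), (P i ∩ T).card
      = ∑ x ∈ T, (Finset.univ.filter (fun i => x ∈ P i)).card := by
    have h1 : ∀ i, (P i ∩ T).card = ∑ x ∈ T, (if x ∈ P i then 1 else 0) := by
      intro i
      rw [Finset.inter_comm, ← Finset.filter_mem_eq_inter, Finset.card_filter]
    have h2 : ∀ x, (Finset.univ.filter (fun i => x ∈ P i)).card
        = ∑ i : Fin (N + 1), (if x ∈ P i then 1 else 0) := by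
      intro x; rw [Finset.card_filter]
    simp only [h1, h2]
    exact Finset.sum_comm
  -- RHS is even
  have hev : Even (∑ i : Fin (N + 1), (P i ∩ T).card) := by
    rw [key]
    exact Finset.even_sum _ (fun x _ => heven x)
  -- compute LHS
  have hP0 : (P 0 ∩ T).card = 0 := by
    rw [Finset.card_eq_zero]
    ext x
    simp only [h0, hTdef, Finset.mem_inter, Finset.mem_filter, Finset.mem_univ, true_and,
      Finset.notMem_empty, iff_false]
    omega
  have hP1 : (P 1 ∩ T).card = 0 := by
    rw [Finset.card_eq_zero]
    ext x
    simp only [h1, hTdef, Finset.mem_inter, Finset.mem_filter, Finset.mem_univ, true_and,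
      Finset.notMem_empty, iff_false]
    omega
  open Fin.NatCast in
  have hsum : ∑ i : Fin (N + 1), (P i ∩ T).card = (N - 1) * (N / 4) := by
    have hrw : ∑ i : Fin (N + 1), (P i ∩ T).card
        = ∑ k ∈ Finset.range (N + 1), (P (k : Fin (N + 1)) ∩ T).card := by
      rw [← Fin.sum_univ_eq_sum_range]
      apply Finset.sum_congr rfl
      intro i _
      rw [Fin.cast_val_eq_self]
    rw [hrw, Finset.range_eq_Ico,
      ← Finset.sum_Ico_consecutive _ (Nat.zero_le 2) (by omega : 2 ≤ N + 1)]
    have hlow : ∑ k ∈ Finset.Ico (0:ℕ) 2, (P (k : Fin (N + 1)) ∩ T).card = 0 := by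
      have : Finset.Ico 0 2 = {0, 1} := by decide
      rw [this]
      simp [Finset.sum_insert (by decide : (0:ℕ) ∉ ({1} : Finset ℕ)),
        Finset.sum_singleton, hP0, hP1]
    have hhigh : ∑ k ∈ Finset.Ico 2 (N + 1), (P (k : Fin (N + 1)) ∩ T).card
        = (N - 1) * (N / 4) := by
      have hc : ∀ k ∈ Finset.Ico 2 (N + 1), (P (k : Fin (N + 1)) ∩ T).card = N / 4 := by
        intro k hk
        rw [Finset.mem_Ico] at hk
        apply hT
        rw [Fin.val_cast_of_lt (by omega)]
        exact hk.1
      rw [Finset.sum_congr rfl hc, Finset.sum_const, Nat.card_Ico, smul_eq_mul,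
        (by omega : N + 1 - 2 = N - 1)]
    rw [hlow, hhigh, Nat.zero_add]
  rw [hsum] at hev
  have hodd : Odd ((N - 1) * (N / 4)) := by
    rw [Nat.odd_mul]
    constructor <;> (rw [Nat.odd_iff]; omega)
  exact (Nat.not_odd_iff_even.mpr hev) hodd
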